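/- arXiv:math/0703794 — 3 statements merged into one kernel-verified Lean document; each statement's English description precedes it below -/
import Mathlib

section
/- Let H ∈ (1/2, 1), t > 0 and g(s) = (s+1)^(H-1/2) - s^(H-1/2). Then lim_{h → 0⁺} ∫₀^{t/h} (1 - hs/t)^(1-2H) g(s)² ds = ∫₀^∞ g(s)² ds, and this limit is finite. -/
open Filter MeasureTheory
open Set Real

lemma g_nonneg {a : ℝ} (ha : 0 ≤ a) (s : ℝ) (hs : 0 ≤ s) :
    0 ≤ (s + 1) ^ a - s ^ a :=
  sub_nonneg.2 (Real.rpow_le_rpow hs (by linarith) ha)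

lemma g_le {a : ℝ} (ha : 0 < a) (ha1 : a ≤ 1) {s : ℝ} (hs : 0 < s) :
    (s + 1) ^ a - s ^ a ≤ a * s ^ (a - 1) := by
  have h1 : (s + 1 : ℝ) = s * (1 + 1/s) := by field_simp
  have h2 : (s + 1) ^ a = s ^ a * (1 + 1/s) ^ a := by
    rw [h1, Real.mul_rpow hs.le (by positivity)]
  have h3 : (1 + 1/s) ^ a ≤ 1 + a * (1/s) :=
    rpow_one_add_le_one_add_mul_self (le_trans (by norm_num) (by positivity : (0:ℝ) ≤ 1/s)) ha.le ha1
  have h4 : s ^ a * (1/s) = s ^ (a - 1) := by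
    rw [Real.rpow_sub hs, Real.rpow_one, mul_one_div]
  calc (s + 1) ^ a - s ^ a ≤ s ^ a * (1 + a * (1/s)) - s ^ a := by
        rw [h2]; gcongr
    _ = a * (s ^ a * (1/s)) := by ring
    _ = a * s ^ (a - 1) := by rw [h4]

lemma g2_le (H : ℝ) (hH : 1/2 < H ∧ H < 1) {s : ℝ} (hs : 0 < s) :
    ((s + 1) ^ (H - 1/2) - s ^ (H - 1/2)) ^ 2 ≤ (H - 1/2) ^ 2 * s ^ (2*H - 3) := by
  obtain ⟨h1, h2⟩ := hH
  have ha : 0 < H - 1/2 := by linarith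
  have hb := g_le ha (by linarith) hs
  have hnn := g_nonneg ha.le s hs.le
  calc ((s + 1) ^ (H - 1/2) - s ^ (H - 1/2)) ^ 2 ≤ ((H - 1/2) * s ^ (H - 1/2 - 1)) ^ 2 := by gcongr
    _ = (H - 1/2) ^ 2 * s ^ (2*H - 3) := by
        rw [mul_pow, ← Real.rpow_natCast (s ^ (H - 1/2 - 1)) 2, ← Real.rpow_mul hs.le]
        congr 1
        push_cast
        ring

lemma g_cont {a : ℝ} (ha : 0 < a) :
    Continuous (fun s : ℝ => ((s + 1) ^ a - s ^ a) ^ 2) := by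
  have h : Continuous (fun s : ℝ => s ^ a) := by
    rw [continuous_iff_continuousAt]
    intro x
    exact Real.continuousAt_rpow_const x a (Or.inr ha.le)
  exact ((h.comp (continuous_id.add continuous_const)).sub h).pow 2

lemma g2_integrable (H : ℝ) (hH : 1/2 < H ∧ H < 1) :
    IntegrableOn (fun s : ℝ => ((s + 1) ^ (H - 1/2) - s ^ (H - 1/2)) ^ 2) (Set.Ioi 0) := by
  obtain ⟨h1, h2⟩ := hH
  have ha : 0 < H - 1/2 := by linarith
  have hcont := g_cont ha
  have hIoc : IntegrableOn (fun s : ℝ => ((s + 1) ^ (H-1/2) - s ^ (H-1/2)) ^ 2) (Set.Ioc 0 1) :=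
    (hcont.integrableOn_Ioc)
  have hIoi : IntegrableOn (fun s : ℝ => ((s + 1) ^ (H-1/2) - s ^ (H-1/2)) ^ 2) (Set.Ioi 1) := by
    have hdom : IntegrableOn (fun s : ℝ => (H-1/2) ^ 2 * s ^ (2*H - 3)) (Set.Ioi 1) := by
      refine (integrableOn_Ioi_rpow_of_lt ?_ one_pos).const_mul _
      linarith
    refine hdom.mono' hcont.aestronglyMeasurable.restrict ?_
    filter_upwards [ae_restrict_mem measurableSet_Ioi] with s hs
    have hs1 : (0:ℝ) < s := lt_trans one_pos hs
    rw [Real.norm_eq_abs, abs_of_nonneg (by positivity)]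
    exact g2_le H ⟨h1, h2⟩ hs1
  have : Set.Ioi (0:ℝ) = Set.Ioc 0 1 ∪ Set.Ioi 1 := (Set.Ioc_union_Ioi_eq_Ioi (by norm_num)).symm
  rw [this]
  exact hIoc.union hIoi

lemma w_ii {p : ℝ} (hp : -1 < p) {c : ℝ} (hc : c ≠ 0) (a b : ℝ) :
    IntervalIntegrable (fun s : ℝ => (1 - c * s) ^ p) volume a b := by
  have h1 : IntervalIntegrable (fun x : ℝ => x ^ p) volume (1 - c * a) (1 - c * b) :=
    intervalIntegral.intervalIntegrable_rpow' hp
  have h2 := (h1.comp_sub_left 1).comp_mul_left (c := c)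
  have ea : (1 - (1 - c * a)) / c = a := by field_simp; ring
  have eb : (1 - (1 - c * b)) / c = b := by field_simp; ring
  rw [ea, eb] at h2
  exact h2

set_option maxHeartbeats 2000000 in
/-- `∫₀^{t/h} (1 - hs/t)^(1-2H) g(s)² ds → ∫₀^∞ g(s)² ds` as `h → 0⁺`,
and the limit is finite (i.e. `g²` is integrable on `(0,∞)`). -/
theorem stmt3 (H t : ℝ) (hH : 1/2 < H ∧ H < 1) (ht : 0 < t) :
    Tendsto
      (fun h : ℝ => ∫ s in Set.Ioc (0:ℝ) (t / h),
        (1 - h * s / t) ^ (1 - 2 * H) * ((s + 1) ^ (H - 1/2) - s ^ (H - 1/2)) ^ 2)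
      (nhdsWithin 0 (Set.Ioi 0))
      (nhds (∫ s in Set.Ioi (0:ℝ), ((s + 1) ^ (H - 1/2) - s ^ (H - 1/2)) ^ 2)) ∧
    IntegrableOn (fun s : ℝ => ((s + 1) ^ (H - 1/2) - s ^ (H - 1/2)) ^ 2)
      (Set.Ioi 0) := by
  obtain ⟨hH1, hH2⟩ := hH
  have hg2int := g2_integrable H ⟨hH1, hH2⟩
  refine ⟨?_, hg2int⟩
  set g2 : ℝ → ℝ := fun s => ((s + 1) ^ (H - 1/2) - s ^ (H - 1/2)) ^ 2 with hg2def
  set p : ℝ := 1 - 2 * H with hpdef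
  have hp0 : p < 0 := by rw [hpdef]; linarith
  have hp1 : -1 < p := by rw [hpdef]; linarith
  have hg2nn : ∀ s, 0 ≤ g2 s := fun s => sq_nonneg _
  have hg2cont : Continuous g2 := g_cont (by linarith : (0:ℝ) < H - 1/2)
  show Tendsto (fun h : ℝ => ∫ s in Set.Ioc (0:ℝ) (t / h), (1 - h * s / t) ^ p * g2 s)
      (nhdsWithin 0 (Set.Ioi 0)) (nhds (∫ s in Set.Ioi (0:ℝ), g2 s))
  have hwmeas : ∀ h : ℝ, Measurable (fun s : ℝ => (1 - h * s / t) ^ p) := by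
    intro h; fun_prop
  have hWii : ∀ {h : ℝ}, h ≠ 0 → ∀ a b : ℝ,
      IntervalIntegrable (fun s : ℝ => (1 - h * s / t) ^ p) volume a b := by
    intro h hh a b
    have := w_ii hp1 (c := h / t) (div_ne_zero hh ht.ne') a b
    simpa [div_mul_eq_mul_div] using this
  set c0 : ℝ := (1/2 : ℝ) ^ p with hc0def
  have hc0_1 : 1 ≤ c0 :=
    Real.one_le_rpow_of_pos_of_le_one_of_nonpos one_half_pos (by norm_num) hp0.le
  -- the big per-h fact
  have perh : ∀ h : ℝ, 0 < h →
      ((∫ s in Set.Ioc (0:ℝ) (t / h), (1 - h * s / t) ^ p * g2 s)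
          = (∫ s in Set.Ioc (0:ℝ) (t/(2*h)), ((1 - h * s / t) ^ p - 1) * g2 s)
            + (∫ s in Set.Ioc (t/(2*h)) (t / h), (1 - h * s / t) ^ p * g2 s)
            + ((∫ s in Set.Ioi (0:ℝ), g2 s) - ∫ s in Set.Ioi (t/(2*h)), g2 s))
        ∧ 0 ≤ (∫ s in Set.Ioc (t/(2*h)) (t / h), (1 - h * s / t) ^ p * g2 s)
        ∧ (∫ s in Set.Ioc (t/(2*h)) (t / h), (1 - h * s / t) ^ p * g2 s)
            ≤ 2*(H - 1/2)^2/(2 - 2*H) * (h/t) ^ (2 - 2*H)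
        ∧ (∫ s in Set.Ioi (0:ℝ), g2 s)
            = (∫ s in Set.Ioc (0:ℝ) (t/(2*h)), g2 s) + ∫ s in Set.Ioi (t/(2*h)), g2 s := by
    intro h hh
    set m : ℝ := t / (2*h) with hmdef
    have hm : 0 < m := by positivity
    have hht : (0:ℝ) < h / t := by positivity
    have hR : m < t / h := by
      rw [hmdef, div_lt_div_iff₀ (by positivity) hh]
      nlinarith
    have hbase : ∀ s ∈ Set.Ioc (0:ℝ) m, 1/2 ≤ 1 - h * s / t ∧ 1 - h * s / t ≤ 1 := by
      intro s hs
      have h1 : h * s ≤ t / 2 := by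
        calc h * s ≤ h * m := by gcongr; exact hs.2
          _ = t / 2 := by rw [hmdef]; field_simp
      constructor
      · have h2 : h * s / t ≤ 1/2 := by rw [div_le_iff₀ ht]; nlinarith
        linarith
      · have h2 : 0 ≤ h * s / t := div_nonneg (mul_nonneg hh.le hs.1.le) ht.le
        linarith
    have hw_ge1 : ∀ s ∈ Set.Ioc (0:ℝ) m, 1 ≤ (1 - h * s / t) ^ p := by
      intro s hs
      obtain ⟨hb1, hb2⟩ := hbase s hs
      exact Real.one_le_rpow_of_pos_of_le_one_of_nonpos (by linarith) hb2 hp0.le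
    have hw_le : ∀ s ∈ Set.Ioc (0:ℝ) m, (1 - h * s / t) ^ p ≤ c0 := by
      intro s hs
      obtain ⟨hb1, hb2⟩ := hbase s hs
      exact Real.rpow_le_rpow_of_nonpos one_half_pos hb1 hp0.le
    have hwnn : ∀ s ∈ Set.Ioc m (t/h), 0 ≤ (1 - h * s / t) ^ p := by
      intro s hs
      apply Real.rpow_nonneg
      have h2 : h * s / t ≤ 1 := by
        rw [div_le_one ht]
        calc h * s ≤ h * (t/h) := by gcongr; exact hs.2
          _ = t := by field_simp
      linarith
    have hg2_Ioc : IntegrableOn g2 (Set.Ioc 0 m) := hg2int.mono_set Set.Ioc_subset_Ioi_self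
    have hWg2_1 : IntegrableOn (fun s => (1 - h * s / t) ^ p * g2 s) (Set.Ioc 0 m) := by
      refine (hg2_Ioc.const_mul c0).mono'
        (((hwmeas h).mul hg2cont.measurable).aestronglyMeasurable.restrict) ?_
      filter_upwards [ae_restrict_mem measurableSet_Ioc] with s hs
      have h1 := hw_ge1 s hs
      have h2 := hw_le s hs
      have h3 := hg2nn s
      rw [Real.norm_eq_abs, abs_of_nonneg (by nlinarith : (0:ℝ) ≤ (1 - h * s / t) ^ p * g2 s)]
      exact mul_le_mul_of_nonneg_right h2 h3
    have hA1 : IntegrableOn (fun s => ((1 - h * s / t) ^ p - 1) * g2 s) (Set.Ioc 0 m) := by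
      have he : (fun s => ((1 - h * s / t) ^ p - 1) * g2 s)
          = fun s => (1 - h * s / t) ^ p * g2 s - g2 s := by funext s; ring
      rw [he]
      exact hWg2_1.sub hg2_Ioc
    have hW2 : IntegrableOn (fun s => (1 - h * s / t) ^ p) (Set.Ioc m (t/h)) := by
      rw [← intervalIntegrable_iff_integrableOn_Ioc_of_le hR.le]
      exact hWii hh.ne' m (t/h)
    set M : ℝ := (H - 1/2)^2 * m ^ (2*H - 3) with hMdef
    have hMnn : 0 ≤ M := by rw [hMdef]; positivity
    have hg2M : ∀ s ∈ Set.Ioc m (t/h), g2 s ≤ M := by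
      intro s hs
      have hs0 : 0 < s := lt_trans hm hs.1
      calc g2 s ≤ (H - 1/2)^2 * s ^ (2*H - 3) := g2_le H ⟨hH1, hH2⟩ hs0
        _ ≤ M := by
            rw [hMdef]
            exact mul_le_mul_of_nonneg_left
              (Real.rpow_le_rpow_of_nonpos hm hs.1.le (by linarith)) (by positivity)
    have hWg2_2 : IntegrableOn (fun s => (1 - h * s / t) ^ p * g2 s) (Set.Ioc m (t/h)) := by
      refine (hW2.const_mul M).mono'
        (((hwmeas h).mul hg2cont.measurable).aestronglyMeasurable.restrict) ?_
      filter_upwards [ae_restrict_mem measurableSet_Ioc] with s hs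
      rw [Real.norm_eq_abs, abs_of_nonneg (mul_nonneg (hwnn s hs) (hg2nn s))]
      calc (1 - h*s/t)^p * g2 s ≤ (1 - h*s/t)^p * M :=
            mul_le_mul_of_nonneg_left (hg2M s hs) (hwnn s hs)
        _ = M * (1 - h*s/t)^p := by ring
    have hg2_Ioi : IntegrableOn g2 (Set.Ioi m) := hg2int.mono_set (Set.Ioi_subset_Ioi hm.le)
    -- splitting identities
    have hsplit3 : (∫ s in Set.Ioi (0:ℝ), g2 s)
        = (∫ s in Set.Ioc (0:ℝ) m, g2 s) + ∫ s in Set.Ioi m, g2 s := by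
      rw [← setIntegral_union (Set.Ioc_disjoint_Ioi le_rfl) measurableSet_Ioi hg2_Ioc hg2_Ioi,
        Set.Ioc_union_Ioi_eq_Ioi hm.le]
    have hsplit1 : (∫ s in Set.Ioc (0:ℝ) (t/h), (1 - h * s / t) ^ p * g2 s)
        = (∫ s in Set.Ioc (0:ℝ) m, (1 - h * s / t) ^ p * g2 s)
          + ∫ s in Set.Ioc m (t/h), (1 - h * s / t) ^ p * g2 s := by
      rw [← setIntegral_union
          (Set.Ioc_disjoint_Ioc.2 (le_trans (min_le_left _ _) (le_max_right _ _)))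
          measurableSet_Ioc hWg2_1 hWg2_2,
        Set.Ioc_union_Ioc_eq_Ioc hm.le hR.le]
    have hsplit2 : (∫ s in Set.Ioc (0:ℝ) m, (1 - h * s / t) ^ p * g2 s)
        = (∫ s in Set.Ioc (0:ℝ) m, ((1 - h * s / t) ^ p - 1) * g2 s)
          + ∫ s in Set.Ioc (0:ℝ) m, g2 s := by
      rw [← integral_add hA1 hg2_Ioc]
      congr 1
      funext s
      ring
    refine ⟨by rw [hsplit1, hsplit2, hsplit3]; ring, ?_, ?_, hsplit3⟩
    · exact setIntegral_nonneg measurableSet_Ioc fun s hs => mul_nonneg (hwnn s hs) (hg2nn s)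
    -- the bound on B
    have hJ : (∫ s in Set.Ioc m (t/h), (1 - h*s/t)^p)
        = (h/t)^p * (m^(p+1)/(p+1)) := by
      rw [← intervalIntegral.integral_of_le hR.le]
      have hco : Set.EqOn (fun s : ℝ => (1 - h*s/t)^p)
          (fun s => (h/t)^p * (t/h - s)^p) (Set.uIcc m (t/h)) := by
        intro s hs
        rw [Set.uIcc_of_le hR.le] at hs
        have he : (1 - h*s/t) = (h/t) * (t/h - s) := by field_simp
        simp only
        rw [he, Real.mul_rpow hht.le (by linarith [hs.2] : (0:ℝ) ≤ t/h - s)]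
      rw [intervalIntegral.integral_congr hco, intervalIntegral.integral_const_mul]
      congr 1
      rw [intervalIntegral.integral_comp_sub_left (fun x => x ^ p) (t/h)]
      have hz : t/h - t/h = 0 := sub_self _
      have hRm : t/h - m = m := by rw [hmdef]; field_simp; ring
      rw [hz, hRm, integral_rpow (Or.inl hp1),
        Real.zero_rpow (by rw [hpdef]; intro hc; linarith [hc] : p + 1 ≠ 0)]
      ring
    have halg : M * ((h/t)^p * (m^(p+1)/(p+1)))
        = 2*(H - 1/2)^2/(2 - 2*H) * (h/t) ^ (2 - 2*H) := by
      have e0 : p + 1 = 2 - 2*H := by rw [hpdef]; ring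
      have e1 : m ^ (2*H-3) * m ^ (p+1) = m⁻¹ := by
        rw [← Real.rpow_add hm]
        have e : 2*H-3 + (p+1) = -1 := by rw [hpdef]; ring
        rw [e, Real.rpow_neg_one]
      have e2 : m⁻¹ = 2 * (h/t) := by rw [hmdef, inv_div]; ring
      have e3 : (h/t) * (h/t)^p = (h/t)^(2-2*H) := by
        rw [show (2-2*H : ℝ) = 1 + p by rw [hpdef]; ring, Real.rpow_add hht, Real.rpow_one]
      calc M * ((h/t)^p * (m^(p+1)/(p+1)))
          = (H-1/2)^2 * (m ^ (2*H-3) * m^(p+1)) * (h/t)^p / (p+1) := by rw [hMdef]; ring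
        _ = (H-1/2)^2 * (2 * ((h/t) * (h/t)^p)) / (2-2*H) := by rw [e1, e2, e0]; ring
        _ = 2*(H - 1/2)^2/(2 - 2*H) * (h/t) ^ (2 - 2*H) := by rw [e3]; ring
    calc (∫ s in Set.Ioc m (t/h), (1 - h * s / t) ^ p * g2 s)
        ≤ ∫ s in Set.Ioc m (t/h), M * (1 - h * s / t) ^ p := by
          refine setIntegral_mono_on hWg2_2 (hW2.const_mul M) measurableSet_Ioc ?_
          intro s hs
          calc (1 - h*s/t)^p * g2 s ≤ (1 - h*s/t)^p * M :=
                mul_le_mul_of_nonneg_left (hg2M s hs) (hwnn s hs)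
            _ = M * (1 - h*s/t)^p := by ring
      _ = M * ∫ s in Set.Ioc m (t/h), (1 - h * s / t) ^ p := integral_const_mul M _
      _ = 2*(H - 1/2)^2/(2 - 2*H) * (h/t) ^ (2 - 2*H) := by rw [hJ, halg]
  -- limit of the Ioc piece of g2
  have hmtop : Tendsto (fun h : ℝ => t/(2*h)) (nhdsWithin 0 (Set.Ioi 0)) atTop := by
    have h1 : Tendsto (fun h : ℝ => (t/2) * h⁻¹) (nhdsWithin 0 (Set.Ioi 0)) atTop :=
      tendsto_inv_nhdsGT_zero.const_mul_atTop (by positivity)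
    refine h1.congr fun h => ?_
    rw [← div_eq_mul_inv, div_div]
  have hIoc_t : Tendsto (fun h : ℝ => ∫ s in Set.Ioc (0:ℝ) (t/(2*h)), g2 s)
      (nhdsWithin 0 (Set.Ioi 0)) (nhds (∫ s in Set.Ioi (0:ℝ), g2 s)) := by
    have h0 := intervalIntegral_tendsto_integral_Ioi 0 hg2int hmtop
    refine h0.congr' ?_
    filter_upwards [self_mem_nhdsWithin] with h hh
    have hh0 : (0:ℝ) < h := hh
    rw [intervalIntegral.integral_of_le (le_of_lt (div_pos ht (by linarith)))]
  have hC : Tendsto (fun h : ℝ => ∫ s in Set.Ioi (t/(2*h)), g2 s)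
      (nhdsWithin 0 (Set.Ioi 0)) (nhds 0) := by
    have h1 := (tendsto_const_nhds (x := ∫ s in Set.Ioi (0:ℝ), g2 s)
      (f := nhdsWithin (0:ℝ) (Set.Ioi 0))).sub hIoc_t
    rw [sub_self] at h1
    refine h1.congr' ?_
    filter_upwards [self_mem_nhdsWithin] with h hh
    rw [(perh h hh).2.2.2]
    ring
  -- limit of B
  have hE : Tendsto (fun h : ℝ => 2*(H - 1/2)^2/(2 - 2*H) * (h/t) ^ (2 - 2*H))
      (nhdsWithin 0 (Set.Ioi 0)) (nhds 0) := by
    have h1 : Tendsto (fun h : ℝ => h/t) (nhdsWithin 0 (Set.Ioi 0)) (nhds 0) := by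
      have := (continuous_id.div_const t).tendsto 0
      simp only [id_eq, zero_div] at this
      exact this.mono_left nhdsWithin_le_nhds
    have h2 : ContinuousAt (fun x : ℝ => x ^ (2 - 2*H)) 0 :=
      Real.continuousAt_rpow_const 0 _ (Or.inr (by linarith))
    have h3 := (h2.tendsto.comp h1).const_mul (2*(H - 1/2)^2/(2 - 2*H))
    simp only [Function.comp_def, Real.zero_rpow (by intro hc; linarith [hc] : (2 - 2*H : ℝ) ≠ 0),
      mul_zero] at h3
    exact h3
  have hB : Tendsto (fun h : ℝ => ∫ s in Set.Ioc (t/(2*h)) (t/h), (1 - h * s / t) ^ p * g2 s)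
      (nhdsWithin 0 (Set.Ioi 0)) (nhds 0) := by
    refine squeeze_zero' ?_ ?_ hE
    · filter_upwards [self_mem_nhdsWithin] with h hh
      exact (perh h hh).2.1
    · filter_upwards [self_mem_nhdsWithin] with h hh
      exact (perh h hh).2.2.1
  -- limit of A via dominated convergence
  have hA : Tendsto (fun h : ℝ => ∫ s in Set.Ioc (0:ℝ) (t/(2*h)), ((1 - h * s / t) ^ p - 1) * g2 s)
      (nhdsWithin 0 (Set.Ioi 0)) (nhds 0) := by
    have heq : ∀ h : ℝ, (∫ s in Set.Ioc (0:ℝ) (t/(2*h)), ((1 - h * s / t) ^ p - 1) * g2 s)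
        = ∫ s, (Set.Ioc (0:ℝ) (t/(2*h))).indicator
            (fun s => ((1 - h * s / t) ^ p - 1) * g2 s) s := by
      intro h
      rw [integral_indicator measurableSet_Ioc]
    simp only [heq]
    have h0 : Tendsto (fun h : ℝ => ∫ s, (Set.Ioc (0:ℝ) (t/(2*h))).indicator
        (fun s => ((1 - h * s / t) ^ p - 1) * g2 s) s)
        (nhdsWithin 0 (Set.Ioi 0)) (nhds (∫ _ : ℝ, (0:ℝ))) := by
      refine tendsto_integral_filter_of_dominated_convergence
        ((Set.Ioi (0:ℝ)).indicator (fun s => c0 * g2 s)) ?_ ?_ ?_ ?_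
      · filter_upwards with h
        exact ((((hwmeas h).sub measurable_const).mul hg2cont.measurable).indicator
          measurableSet_Ioc).aestronglyMeasurable
      · filter_upwards [self_mem_nhdsWithin] with h hh
        refine ae_of_all _ fun s => ?_
        have hh0 : (0:ℝ) < h := hh
        have hne : h ≠ 0 := ne_of_gt hh0
        by_cases hs : s ∈ Set.Ioc (0:ℝ) (t/(2*h))
        · rw [Set.indicator_of_mem hs, Set.indicator_of_mem (Set.mem_Ioi.2 hs.1)]
          have hbase : 1/2 ≤ 1 - h * s / t ∧ 1 - h * s / t ≤ 1 := by
            constructor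
            · have h1 : h * s ≤ t / 2 := by
                have h2 := hs.2
                have h3 : h * s ≤ h * (t/(2*h)) := mul_le_mul_of_nonneg_left h2 hh0.le
                have h4 : h * (t/(2*h)) = t / 2 := by field_simp
                linarith
              have h2 : h * s / t ≤ 1/2 := by rw [div_le_iff₀ ht]; nlinarith
              linarith
            · have h2 : 0 ≤ h * s / t := div_nonneg (mul_nonneg hh0.le hs.1.le) ht.le
              linarith
          have hge : 1 ≤ (1 - h * s / t) ^ p :=
            Real.one_le_rpow_of_pos_of_le_one_of_nonpos (by linarith [hbase.1]) hbase.2 hp0.le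
          have hle : (1 - h * s / t) ^ p ≤ c0 :=
            Real.rpow_le_rpow_of_nonpos one_half_pos hbase.1 hp0.le
          have h3 := hg2nn s
          rw [Real.norm_eq_abs, abs_of_nonneg (by nlinarith : (0:ℝ) ≤ ((1 - h * s / t) ^ p - 1) * g2 s)]
          nlinarith
        · rw [Set.indicator_of_notMem hs, norm_zero]
          exact Set.indicator_nonneg (fun s hs => by positivity) s
      · rw [integrable_indicator_iff measurableSet_Ioi]
        exact hg2int.const_mul c0
      · refine ae_of_all _ fun s => ?_
        by_cases hs : 0 < s
        · have hev : ∀ᶠ h in nhdsWithin (0:ℝ) (Set.Ioi 0),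
              (Set.Ioc (0:ℝ) (t/(2*h))).indicator
                (fun s => ((1 - h * s / t) ^ p - 1) * g2 s) s
              = ((1 - h * s / t) ^ p - 1) * g2 s := by
            filter_upwards [Ioo_mem_nhdsGT (div_pos ht (by linarith) : (0:ℝ) < t/(2*s))]
              with h hh
            obtain ⟨hh1, hh2⟩ := hh
            have hmem : s ∈ Set.Ioc (0:ℝ) (t/(2*h)) := by
              refine ⟨hs, ?_⟩
              rw [le_div_iff₀ (by linarith : (0:ℝ) < 2*h)]
              rw [lt_div_iff₀ (by linarith : (0:ℝ) < 2*s)] at hh2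
              nlinarith
            exact Set.indicator_of_mem hmem _
          have hlim : Tendsto (fun h : ℝ => ((1 - h * s / t) ^ p - 1) * g2 s)
              (nhdsWithin 0 (Set.Ioi 0)) (nhds 0) := by
            have c1 : Tendsto (fun h : ℝ => 1 - h * s / t) (nhds 0) (nhds 1) := by
              have hcont : Continuous (fun h : ℝ => 1 - h * s / t) := by fun_prop
              simpa using hcont.tendsto 0
            have c2 : ContinuousAt (fun x : ℝ => x ^ p) 1 :=
              Real.continuousAt_rpow_const 1 p (Or.inl one_ne_zero)
            have c3 : Tendsto (fun h : ℝ => (1 - h * s / t) ^ p)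
                (nhdsWithin (0:ℝ) (Set.Ioi 0)) (nhds ((1:ℝ) ^ p)) :=
              c2.tendsto.comp (c1.mono_left nhdsWithin_le_nhds)
            rw [Real.one_rpow] at c3
            have c4 : Tendsto (fun h : ℝ => ((1 - h * s / t) ^ p - 1) * g2 s)
                (nhdsWithin (0:ℝ) (Set.Ioi 0)) (nhds ((1 - 1) * g2 s)) :=
              (c3.sub (tendsto_const_nhds (x := (1:ℝ)))).mul_const (g2 s)
            simpa using c4
          exact hlim.congr' (hev.mono fun _ e => e.symm)
        · have : ∀ h : ℝ, (Set.Ioc (0:ℝ) (t/(2*h))).indicator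
              (fun s => ((1 - h * s / t) ^ p - 1) * g2 s) s = 0 := by
            intro h
            exact Set.indicator_of_notMem (fun hc => hs hc.1) _
          simp only [this]
          exact tendsto_const_nhds
    rw [integral_zero] at h0
    exact h0
  -- assemble
  have T := (hA.add hB).add ((tendsto_const_nhds
      (x := ∫ s in Set.Ioi (0:ℝ), g2 s) (f := nhdsWithin (0:ℝ) (Set.Ioi 0))).sub hC)
  rw [add_zero, zero_add, sub_zero] at T
  refine Tendsto.congr' ?_ T
  filter_upwards [self_mem_nhdsWithin] with h hh
  exact ((perh h hh).1).symm
end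

section
/- Let H ∈ (1/2, 1), g(s) = (s+1)^(H-1/2) - s^(H-1/2) and r(x) = x ∫₀^∞ g(x²u) g(u) du for x > 0. If r is constant on (0, ∞), then by Cauchy–Schwarz equality in L², g(2u) = g(u) for all u ≥ 0, which is false; hence r is not constant on (0, ∞). -/
open MeasureTheory Set Real

-- continuity of g
lemma auxg_cont {a : ℝ} (ha : 0 < a) : Continuous (fun s : ℝ => (s+1)^a - s^a) := by
  have h : Continuous (fun s : ℝ => s ^ a) :=
    continuous_iff_continuousAt.2 fun x => Real.continuousAt_rpow_const x a (Or.inr ha.le)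
  exact (h.comp (continuous_id.add continuous_const)).sub h

-- nonneg
lemma auxg_nonneg {a : ℝ} (ha : 0 < a) {s : ℝ} (hs : 0 ≤ s) :
    0 ≤ (s+1)^a - s^a :=
  sub_nonneg.2 (Real.rpow_le_rpow hs (by linarith) ha.le)

-- tail bound
lemma auxg_tail {a : ℝ} (ha : 0 < a) (ha1 : a ≤ 1) {s : ℝ} (hs : 1 ≤ s) :
    (s+1)^a - s^a ≤ a * s^(a-1) := by
  have hs0 : (0:ℝ) < s := by linarith
  have h1 : s + 1 = s * (1 + 1/s) := by field_simp
  have h2 : (s+1)^a = s^a * (1 + 1/s)^a := by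
    rw [h1, Real.mul_rpow hs0.le (by positivity)]
  have h3 : (1 + 1/s)^a ≤ 1 + a * (1/s) := by
    refine rpow_one_add_le_one_add_mul_self ?_ ha.le ha1
    have h : (0:ℝ) ≤ 1/s := by positivity
    linarith
  have h4 : s^a * (1/s) = s^(a-1) := by
    rw [Real.rpow_sub hs0, Real.rpow_one]; ring
  calc (s+1)^a - s^a ≤ s^a * (1 + a * (1/s)) - s^a := by
        rw [h2]; have := Real.rpow_nonneg hs0.le a; nlinarith
    _ = a * s^(a-1) := by rw [← h4]; ring

-- integrability of g(b·)²
lemma auxg_sq_int {a : ℝ} (ha : 0 < a) (ha2 : a < 1/2) {b : ℝ} (hb : 1 ≤ b) :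
    IntegrableOn (fun u : ℝ => ((b*u+1)^a - (b*u)^a)^2) (Ioi 0) := by
  have hcont : Continuous (fun u : ℝ => ((b*u+1)^a - (b*u)^a)^2) :=
    ((auxg_cont ha).comp (continuous_const.mul continuous_id)).pow 2
  have h1 : IntegrableOn (fun u : ℝ => ((b*u+1)^a - (b*u)^a)^2) (Ioc 0 1) :=
    (hcont.integrableOn_Icc (a := 0) (b := 1)).mono_set Ioc_subset_Icc_self
  have h2 : IntegrableOn (fun u : ℝ => ((b*u+1)^a - (b*u)^a)^2) (Ioi 1) := by
    have hbase : IntegrableOn (fun u : ℝ => a^2 * b^(2*a-2) * u^(2*a-2)) (Ioi 1) :=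
      (integrableOn_Ioi_rpow_of_lt (by linarith) one_pos).const_mul _
    refine hbase.integrable.mono hcont.aestronglyMeasurable ?_
    filter_upwards [ae_restrict_mem measurableSet_Ioi] with u hu
    have hu1 : (1:ℝ) ≤ u := le_of_lt hu
    have hu0 : (0:ℝ) < u := by linarith
    have hb0 : (0:ℝ) < b := by linarith
    have hbu1 : (1:ℝ) ≤ b * u := by nlinarith
    have hbu0 : (0:ℝ) < b * u := by positivity
    have hg1 : (b*u+1)^a - (b*u)^a ≤ a * (b*u)^(a-1) := auxg_tail ha (by linarith) hbu1
    have hg0 : 0 ≤ (b*u+1)^a - (b*u)^a := auxg_nonneg ha hbu0.le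
    have hpow : ((b*u)^(a-1))^2 = b^(2*a-2) * u^(2*a-2) := by
      rw [sq, ← Real.rpow_add hbu0, Real.mul_rpow hb0.le hu0.le]
      ring_nf
    rw [Real.norm_eq_abs, Real.norm_eq_abs, abs_of_nonneg (by positivity),
      abs_of_nonneg (by nlinarith [Real.rpow_nonneg hbu0.le (a-1)])]
    calc ((b*u+1)^a - (b*u)^a)^2 ≤ (a * (b*u)^(a-1))^2 := by
          apply sq_le_sq' <;> nlinarith [Real.rpow_nonneg hbu0.le (a-1)]
      _ = a^2 * b^(2*a-2) * u^(2*a-2) := by rw [mul_pow, hpow]; ring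
  have : Ioc (0:ℝ) 1 ∪ Ioi 1 = Ioi 0 := Ioc_union_Ioi_eq_Ioi (by norm_num)
  rw [← this]; exact h1.union h2

-- product integrability
lemma auxg_prod_int {a : ℝ} (ha : 0 < a) (ha2 : a < 1/2) :
    IntegrableOn (fun u : ℝ => ((2*u+1)^a - (2*u)^a) * ((u+1)^a - u^a)) (Ioi 0) := by
  have h1 := auxg_sq_int ha ha2 (b := 2) (by norm_num)
  have h2 := auxg_sq_int ha ha2 (b := 1) le_rfl
  have hcont : Continuous (fun u : ℝ => ((2*u+1)^a - (2*u)^a) * ((u+1)^a - u^a)) := by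
    have h := auxg_cont ha
    exact (h.comp (continuous_const.mul continuous_id)).mul
      (by simpa using h)
  refine Integrable.mono (h1.add h2) hcont.aestronglyMeasurable ?_
  filter_upwards [ae_restrict_mem measurableSet_Ioi] with u hu
  simp only [Pi.add_apply]
  have hu0 : (0:ℝ) < u := hu
  have hA : 0 ≤ (2*u+1)^a - (2*u)^a := auxg_nonneg ha (by linarith)
  have hB : 0 ≤ (u+1)^a - u^a := auxg_nonneg ha hu0.le
  rw [Real.norm_eq_abs, Real.norm_eq_abs, abs_of_nonneg (by positivity),
    abs_of_nonneg (by positivity)]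
  simp only [one_mul]
  nlinarith [sq_nonneg (((2*u+1)^a - (2*u)^a) - ((u+1)^a - u^a))]

/-- The function `r(x) = x ∫₀^∞ g(x²u) g(u) du` is not constant on `(0,∞)`,
where `g(s) = (s+1)^(H-1/2) - s^(H-1/2)`. -/
theorem stmt6 (H : ℝ) (hH : 1/2 < H ∧ H < 1) :
    ¬ ∃ c : ℝ, ∀ x : ℝ, 0 < x →
      x * ∫ u in Set.Ioi (0:ℝ),
        ((x ^ 2 * u + 1) ^ (H - 1/2) - (x ^ 2 * u) ^ (H - 1/2))
          * ((u + 1) ^ (H - 1/2) - u ^ (H - 1/2)) = c := by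
  rintro ⟨c, hc⟩
  set a : ℝ := H - 1/2 with hadef
  have ha : 0 < a := by simp only [hadef]; linarith [hH.1]
  have ha2 : a < 1/2 := by simp only [hadef]; linarith [hH.2]
  set g : ℝ → ℝ := fun s => (s+1)^a - s^a with hg
  -- x = 1
  have h1 : ∫ u in Ioi (0:ℝ), g u * g u = c := by
    have := hc 1 one_pos
    simpa using this
  -- x = √2
  have h2 : Real.sqrt 2 * ∫ u in Ioi (0:ℝ), g (2*u) * g u = c := by
    have := hc (Real.sqrt 2) (Real.sqrt_pos.2 two_pos)
    simpa [Real.sq_sqrt (by norm_num : (0:ℝ) ≤ 2)] using this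
  set A : ℝ := ∫ u in Ioi (0:ℝ), (g u)^2 with hA
  set I : ℝ := ∫ u in Ioi (0:ℝ), g (2*u) * g u with hI
  set K : ℝ := ∫ u in Ioi (0:ℝ), (g (2*u))^2 with hK
  have hAc : A = c := by
    rw [hA, ← h1]; exact setIntegral_congr_fun measurableSet_Ioi (by intro u _; simp [sq])
  have hKA : K = A / 2 := by
    rw [hK, hA]
    have := MeasureTheory.integral_comp_mul_left_Ioi (fun v => (g v)^2) 0 two_pos
    simp only [mul_zero] at this
    rw [this, smul_eq_mul]; ring
  -- integrability facts
  have hint2 : IntegrableOn (fun u : ℝ => (g (2*u))^2) (Ioi 0) := by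
    simpa [hg] using auxg_sq_int ha ha2 (b := 2) (by norm_num)
  have hint1 : IntegrableOn (fun u : ℝ => (g u)^2) (Ioi 0) := by
    simpa [hg] using auxg_sq_int ha ha2 (b := 1) le_rfl
  have hintp : IntegrableOn (fun u : ℝ => g (2*u) * g u) (Ioi 0) := by
    simpa [hg] using auxg_prod_int ha ha2
  -- the squared difference
  set f : ℝ → ℝ := fun u => (g (2*u) - (Real.sqrt 2)⁻¹ * g u)^2 with hf
  have hfeq : ∀ u : ℝ, f u = (g (2*u))^2 - Real.sqrt 2 * (g (2*u) * g u)
      + (1/2) * (g u)^2 := by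
    intro u
    have hs2 : Real.sqrt 2 * Real.sqrt 2 = 2 := Real.mul_self_sqrt (by norm_num)
    have hs2' : (Real.sqrt 2)⁻¹ * (Real.sqrt 2)⁻¹ = 1/2 := by
      rw [← mul_inv, hs2]; norm_num
    have hs2'' : 2 * (Real.sqrt 2)⁻¹ = Real.sqrt 2 := by
      field_simp
      rw [Real.sq_sqrt (by norm_num)]
    have expand : ∀ x y : ℝ, (x - (Real.sqrt 2)⁻¹*y)^2
        = x^2 - (2*(Real.sqrt 2)⁻¹)*(x*y) + ((Real.sqrt 2)⁻¹*(Real.sqrt 2)⁻¹)*y^2 := by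
      intros; ring
    simp only [hf]
    rw [expand, hs2'', hs2']
  have hfint : IntegrableOn f (Ioi 0) := by
    refine IntegrableOn.congr_fun ?_ (fun u _ => (hfeq u).symm) measurableSet_Ioi
    exact (hint2.sub (hintp.const_mul _)).add (hint1.const_mul _)
  have hfzero : ∫ u in Ioi (0:ℝ), f u = 0 := by
    have : ∫ u in Ioi (0:ℝ), f u
        = K - Real.sqrt 2 * I + (1/2) * A := by
      have i1 : Integrable (fun u : ℝ => (g (2*u))^2 - Real.sqrt 2 * (g (2*u) * g u))
          (volume.restrict (Ioi 0)) := hint2.sub (hintp.const_mul _)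
      have i2 : Integrable (fun u : ℝ => (1/2 : ℝ) * (g u)^2)
          (volume.restrict (Ioi 0)) := hint1.const_mul _
      have i3 : Integrable (fun u : ℝ => Real.sqrt 2 * (g (2*u) * g u))
          (volume.restrict (Ioi 0)) := hintp.const_mul _
      rw [setIntegral_congr_fun measurableSet_Ioi (fun u _ => hfeq u),
        integral_add i1 i2, integral_sub hint2 i3, integral_const_mul, integral_const_mul]
    rw [this, hKA, hAc, h2]
    ring
  -- but the integral is positive
  have hcont : Continuous fun u : ℝ => g (2*u) - (Real.sqrt 2)⁻¹ * g u := by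
    have h := auxg_cont ha
    exact ((h.comp (continuous_const.mul continuous_id)).sub
      (continuous_const.mul (by simpa using h)))
  have h0 : g (2*0) - (Real.sqrt 2)⁻¹ * g 0 = 1 - (Real.sqrt 2)⁻¹ := by
    simp [hg, Real.zero_rpow ha.ne']
  have h0pos : 0 < g (2*0) - (Real.sqrt 2)⁻¹ * g 0 := by
    rw [h0]
    have h2lt : (Real.sqrt 2)⁻¹ < 1 := by
      rw [inv_lt_one_iff₀]
      right
      nlinarith [Real.sq_sqrt (by norm_num : (0:ℝ) ≤ 2), Real.sqrt_nonneg 2]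
    linarith
  have hev : ∀ᶠ u in nhds (0:ℝ), 0 < g (2*u) - (Real.sqrt 2)⁻¹ * g u :=
    (hcont.tendsto 0).eventually (eventually_gt_nhds h0pos)
  obtain ⟨δ, hδpos, hδ⟩ := Metric.eventually_nhds_iff.mp hev
  have hsub : Ioo (0:ℝ) δ ⊆ Function.support f ∩ Ioi 0 := by
    intro u hu
    refine ⟨?_, hu.1⟩
    have : 0 < g (2*u) - (Real.sqrt 2)⁻¹ * g u := by
      apply hδ
      rw [Real.dist_eq, sub_zero, abs_of_pos hu.1]
      exact hu.2
    simp only [hf, Function.mem_support]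
    positivity
  have hnn : 0 ≤ᶠ[ae (volume.restrict (Ioi (0:ℝ)))] f := by
    filter_upwards with u
    simp only [hf, Pi.zero_apply]
    exact sq_nonneg _
  have hpos : 0 < ∫ u in Ioi (0:ℝ), f u := by
    rw [setIntegral_pos_iff_support_of_nonneg_ae hnn hfint]
    refine lt_of_lt_of_le ?_ (measure_mono hsub)
    rw [Real.volume_Ioo, sub_zero]
    exact ENNReal.ofReal_pos.mpr hδpos
  linarith
end

section
/- Let H ∈ (1/2, 1), t > 0, and define g(s) = (s+1)^{H-1/2} - s^{H-1/2}, c = c_H/(H - 1/2) for some constant c_H > 0, and V(h) = h^{-2α} c_H² ∫₀^t s^{1-2H} (∫_t^{t+h} (u-s)^{H-3/2} u^{H-1/2} du)² ds for α ∈ (0, H). Then V(h) → 0 as h → 0⁺. More precisely, V(h) satisfies the two-sided bound c² h^{2(H-α)} I(h) ≤ V(h) ≤ c² (1 + h/t)^{2H-1} h^{2(H-α)} I(h) where I(h) = ∫₀^{t/h} (1 - hs/t)^{1-2H} g(s)² ds. -/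
open Filter intervalIntegral MeasureTheory Set

lemma rpow_add_le_add_rpow' {x y p : ℝ} (hx : 0 ≤ x) (hy : 0 ≤ y) (hp : 0 ≤ p) (hp1 : p ≤ 1) :
    (x + y) ^ p ≤ x ^ p + y ^ p := by
  have h := NNReal.coe_le_coe.2 (NNReal.rpow_add_le_add_rpow ⟨x, hx⟩ ⟨y, hy⟩ hp hp1)
  exact h

lemma rpow_sub_rpow_le {a x k : ℝ} (ha : 0 < a) (ha1 : a ≤ 1) (hx : 0 < x) (hk : 0 < k) :
    (x + k) ^ a - x ^ a ≤ a * k * x ^ (a - 1) := by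
  obtain ⟨c, hc, hceq⟩ := exists_hasDerivAt_eq_slope (fun y => y ^ a)
    (fun y => a * y ^ (a - 1)) (by linarith : x < x + k)
    (fun y hy => (Real.continuousAt_rpow_const y a
      (Or.inl (by intro h; rw [h] at hy; exact absurd hy.1 (not_le.2 hx)))).continuousWithinAt)
    (fun y hy => Real.hasDerivAt_rpow_const
      (Or.inl (by intro h; rw [h] at hy; exact absurd hy.1 (asymm hx))))
  simp only [add_sub_cancel_left] at hceq
  have h1 : (x + k) ^ a - x ^ a = a * c ^ (a - 1) * k := by
    field_simp at hceq; linarith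
  rw [h1]
  have h2 : c ^ (a - 1) ≤ x ^ (a - 1) :=
    Real.rpow_le_rpow_of_nonpos hx hc.1.le (by linarith)
  calc a * c ^ (a - 1) * k ≤ a * x ^ (a - 1) * k := by
        have := mul_le_mul_of_nonneg_left h2 ha.le
        nlinarith
    _ = a * k * x ^ (a - 1) := by ring


section
variable {H t h : ℝ}


-- closed form of ∫ (u-s)^(H-3/2)
lemma innerK (hH : 1/2 < H) :
    (∫ u in t..(t+h), (u - s) ^ (H - 3/2)) =
      ((t + h - s) ^ (H - 1/2) - (t - s) ^ (H - 1/2)) / (H - 1/2) := by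
  rw [intervalIntegral.integral_comp_sub_right (fun u => u ^ (H - 3/2)) s,
    integral_rpow (Or.inl (by linarith))]
  norm_num [show H - 3/2 + 1 = H - 1/2 by ring]

lemma intInt (hH : 1/2 < H) (s : ℝ) :
    IntervalIntegrable (fun u => (u - s) ^ (H - 3/2)) volume t (t+h) := by
  have := (intervalIntegrable_rpow' (a := t - s) (b := t + h - s) (r := H - 3/2)
    (by linarith)).comp_sub_right s
  simpa using this

lemma Jbounds (hH : 1/2 < H) (ht : 0 < t) (hh : 0 < h) {s : ℝ} (hst : s ≤ t) :
    t ^ (H - 1/2) * (((t + h - s) ^ (H - 1/2) - (t - s) ^ (H - 1/2)) / (H - 1/2))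
      ≤ (∫ u in t..(t+h), (u - s) ^ (H - 3/2) * u ^ (H - 1/2)) ∧
    (∫ u in t..(t+h), (u - s) ^ (H - 3/2) * u ^ (H - 1/2))
      ≤ (t + h) ^ (H - 1/2) *
        (((t + h - s) ^ (H - 1/2) - (t - s) ^ (H - 1/2)) / (H - 1/2)) := by
  have hK := innerK (t := t) (h := h) (s := s) hH
  have hbase : IntervalIntegrable (fun u => (u - s) ^ (H - 3/2)) volume t (t+h) :=
    intInt hH s
  have hcont : ContinuousOn (fun u : ℝ => u ^ (H - 1/2)) (uIcc t (t+h)) :=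
    (Real.continuous_rpow_const (by linarith)).continuousOn
  have hprod : IntervalIntegrable (fun u => (u - s) ^ (H - 3/2) * u ^ (H - 1/2))
      volume t (t+h) := hbase.mul_continuousOn hcont
  have hlo : IntervalIntegrable (fun u => (u - s) ^ (H - 3/2) * t ^ (H - 1/2))
      volume t (t+h) := hbase.mul_const _
  have hhi : IntervalIntegrable (fun u => (u - s) ^ (H - 3/2) * (t+h) ^ (H - 1/2))
      volume t (t+h) := hbase.mul_const _
  constructor
  · have := intervalIntegral.integral_mono_on (by linarith : t ≤ t + h) hlo hprod
      (fun u hu => by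
        have h1 : (0:ℝ) ≤ (u - s) ^ (H - 3/2) := Real.rpow_nonneg (by
          have := hu.1; linarith) _
        exact mul_le_mul_of_nonneg_left
          (Real.rpow_le_rpow ht.le hu.1 (by linarith)) h1)
    rw [intervalIntegral.integral_mul_const, hK] at this
    linarith
  · have := intervalIntegral.integral_mono_on (by linarith : t ≤ t + h) hprod hhi
      (fun u hu => by
        have h1 : (0:ℝ) ≤ (u - s) ^ (H - 3/2) := Real.rpow_nonneg (by
          have := hu.1; linarith) _
        exact mul_le_mul_of_nonneg_left
          (Real.rpow_le_rpow (by linarith [hu.1] : (0:ℝ) ≤ u) hu.2 (by linarith)) h1)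
    rw [intervalIntegral.integral_mul_const, hK] at this
    linarith

end


section
variable {H t h : ℝ}

lemma Knonneg (hH : 1/2 < H) (hh : 0 ≤ h) {s : ℝ} (hst : s ≤ t) :
    0 ≤ ((t + h - s) ^ (H - 1/2) - (t - s) ^ (H - 1/2)) / (H - 1/2) :=
  div_nonneg (by
    have := Real.rpow_le_rpow (by linarith : (0:ℝ) ≤ t - s)
      (by linarith : t - s ≤ t + h - s) (by linarith : (0:ℝ) ≤ H - 1/2)
    linarith) (by linarith)

lemma Kcont (hH : 1/2 < H) :
    Continuous (fun s : ℝ => ((t + h - s) ^ (H - 1/2) - (t - s) ^ (H - 1/2)) / (H - 1/2)) := by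
  have h1 : Continuous (fun s : ℝ => (t + h - s) ^ (H - 1/2)) :=
    (Real.continuous_rpow_const (by linarith)).comp (continuous_const.sub continuous_id)
  have h2 : Continuous (fun s : ℝ => (t - s) ^ (H - 1/2)) :=
    (Real.continuous_rpow_const (by linarith)).comp (continuous_const.sub continuous_id)
  exact (h1.sub h2).div_const _

lemma phiInt (hH : 1/2 < H) (hH1 : H < 1) (a b : ℝ) (c : ℝ) :
    IntervalIntegrable (fun s => s ^ (1 - 2*H) *
      (c * (((t + h - s) ^ (H - 1/2) - (t - s) ^ (H - 1/2)) / (H - 1/2))) ^ 2) volume a b :=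
  (intervalIntegrable_rpow' (by linarith)).mul_continuousOn
    (((continuous_const.mul (Kcont hH)).pow 2).continuousOn)

lemma Jmeas (hH : 1/2 < H) (ht : 0 < t) (hh : 0 < h) :
    StronglyMeasurable (fun s : ℝ => ∫ u in t..(t+h), (u - s) ^ (H - 3/2) * u ^ (H - 1/2)) := by
  have hF : StronglyMeasurable (fun p : ℝ × ℝ => (p.2 - p.1) ^ (H - 3/2) * p.2 ^ (H - 1/2)) := by
    apply Measurable.stronglyMeasurable
    fun_prop
  have := hF.integral_prod_right' (ν := volume.restrict (Ioc t (t+h)))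
  have heq : (fun s : ℝ => ∫ u in t..(t+h), (u - s) ^ (H - 3/2) * u ^ (H - 1/2)) =
      fun s => ∫ u, (fun p : ℝ × ℝ => (p.2 - p.1) ^ (H - 3/2) * p.2 ^ (H - 1/2)) (s, u)
        ∂(volume.restrict (Ioc t (t+h))) := by
    funext s
    rw [intervalIntegral.integral_of_le (by linarith)]
  rw [heq]
  exact this

end


section
variable {H t h : ℝ}

lemma Bint (hH : 1/2 < H) (hH1 : H < 1) (ht : 0 < t) (hh : 0 < h) :
    IntervalIntegrable (fun s => s ^ (1 - 2*H) *
      (∫ u in t..(t+h), (u - s) ^ (H - 3/2) * u ^ (H - 1/2)) ^ 2) volume 0 t := by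
  rw [intervalIntegrable_iff_integrableOn_Ioc_of_le ht.le]
  have hg := (intervalIntegrable_iff_integrableOn_Ioc_of_le ht.le).1
    (phiInt (t := t) (h := h) hH hH1 0 t ((t+h) ^ (H - 1/2)))
  refine hg.mono' ?_ ?_
  · have m1 : Measurable fun s : ℝ => s ^ (1 - 2*H) := by fun_prop
    exact (m1.mul ((Jmeas hH ht hh).measurable.pow_const 2)).aestronglyMeasurable
  · filter_upwards [ae_restrict_mem measurableSet_Ioc] with s hs
    have hK0 := Knonneg (t := t) (h := h) hH hh.le hs.2
    have hJ := Jbounds (t := t) (h := h) hH ht hh hs.2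
    have hJ0 : 0 ≤ ∫ u in t..(t+h), (u - s) ^ (H - 3/2) * u ^ (H - 1/2) :=
      le_trans (mul_nonneg (Real.rpow_nonneg ht.le _) hK0) hJ.1
    have hs0 : (0:ℝ) ≤ s ^ (1 - 2*H) := Real.rpow_nonneg hs.1.le _
    rw [Real.norm_eq_abs, abs_of_nonneg (mul_nonneg hs0 (sq_nonneg _))]
    exact mul_le_mul_of_nonneg_left (pow_le_pow_left₀ hJ0 hJ.2 2) hs0

end

section
variable {H t h : ℝ}

lemma constA (c : ℝ) (a b : ℝ) :
    (∫ s in a..b, s ^ (1 - 2*H) *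
      (c * (((t + h - s) ^ (H - 1/2) - (t - s) ^ (H - 1/2)) / (H - 1/2))) ^ 2)
    = c ^ 2 * ∫ s in a..b, s ^ (1 - 2*H) *
      ((((t + h - s) ^ (H - 1/2) - (t - s) ^ (H - 1/2)) / (H - 1/2))) ^ 2 := by
  rw [← intervalIntegral.integral_const_mul]
  apply intervalIntegral.integral_congr
  intro s _
  ring

lemma P1 (hH : 1/2 < H) (hH1 : H < 1) (ht : 0 < t) (hh : 0 < h) :
    (t ^ (H - 1/2)) ^ 2 * (∫ s in (0:ℝ)..t, s ^ (1 - 2*H) *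
        ((((t + h - s) ^ (H - 1/2) - (t - s) ^ (H - 1/2)) / (H - 1/2))) ^ 2)
      ≤ (∫ s in (0:ℝ)..t, s ^ (1 - 2*H) *
        (∫ u in t..(t+h), (u - s) ^ (H - 3/2) * u ^ (H - 1/2)) ^ 2) ∧
    (∫ s in (0:ℝ)..t, s ^ (1 - 2*H) *
        (∫ u in t..(t+h), (u - s) ^ (H - 3/2) * u ^ (H - 1/2)) ^ 2)
      ≤ ((t + h) ^ (H - 1/2)) ^ 2 * ∫ s in (0:ℝ)..t, s ^ (1 - 2*H) *
        ((((t + h - s) ^ (H - 1/2) - (t - s) ^ (H - 1/2)) / (H - 1/2))) ^ 2 := by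
  have hB := Bint hH hH1 ht hh
  constructor
  · rw [← constA]
    apply intervalIntegral.integral_mono_on ht.le (phiInt hH hH1 0 t _) hB
    intro s hs
    have hK0 := Knonneg (t := t) (h := h) hH hh.le hs.2
    have hJ := Jbounds (t := t) (h := h) hH ht hh hs.2
    exact mul_le_mul_of_nonneg_left
      (pow_le_pow_left₀ (mul_nonneg (Real.rpow_nonneg ht.le _) hK0) hJ.1 2)
      (Real.rpow_nonneg hs.1 _)
  · rw [← constA]
    apply intervalIntegral.integral_mono_on ht.le hB (phiInt hH hH1 0 t _)
    intro s hs
    have hK0 := Knonneg (t := t) (h := h) hH hh.le hs.2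
    have hJ := Jbounds (t := t) (h := h) hH ht hh hs.2
    have hJ0 : 0 ≤ ∫ u in t..(t+h), (u - s) ^ (H - 3/2) * u ^ (H - 1/2) :=
      le_trans (mul_nonneg (Real.rpow_nonneg ht.le _) hK0) hJ.1
    exact mul_le_mul_of_nonneg_left (pow_le_pow_left₀ hJ0 hJ.2 2)
      (Real.rpow_nonneg hs.1 _)

end

section
variable {H t h : ℝ}

lemma sq_rpow {x : ℝ} (hx : 0 ≤ x) (p : ℝ) : (x ^ p) ^ 2 = x ^ (p * 2) := by
  rw [← Real.rpow_natCast (x ^ p) 2, ← Real.rpow_mul hx]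
  norm_num

lemma P2 (hH : 1/2 < H) (hH1 : H < 1) (ht : 0 < t) (hh : 0 < h) :
    (∫ s in (0:ℝ)..t, s ^ (1 - 2*H) *
        ((((t + h - s) ^ (H - 1/2) - (t - s) ^ (H - 1/2)) / (H - 1/2))) ^ 2)
    = h ^ (2*H) * t ^ (1 - 2*H) / (H - 1/2) ^ 2 *
      ∫ s in (0:ℝ)..(t/h), (1 - h * s / t) ^ (1 - 2*H) *
        ((s + 1) ^ (H - 1/2) - s ^ (H - 1/2)) ^ 2 := by
  set φ : ℝ → ℝ := fun s => s ^ (1 - 2*H) *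
    ((((t + h - s) ^ (H - 1/2) - (t - s) ^ (H - 1/2)) / (H - 1/2))) ^ 2 with hφ
  have step1 : (∫ v in (0:ℝ)..t, φ (t - v)) = ∫ s in (0:ℝ)..t, φ s := by
    rw [intervalIntegral.integral_comp_sub_left φ t]
    norm_num
  have step2 : (∫ σ in (0:ℝ)..(t/h), φ (t - h * σ)) = h⁻¹ * ∫ v in (0:ℝ)..t, φ (t - v) := by
    have := intervalIntegral.integral_comp_mul_left (a := 0) (b := t/h)
      (fun v => φ (t - v)) hh.ne'
    rw [mul_zero, show h * (t/h) = t by field_simp, smul_eq_mul] at this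
    exact this
  have step3 : ∀ σ ∈ uIcc (0:ℝ) (t/h), φ (t - h * σ)
      = (h ^ (2*H - 1) * t ^ (1 - 2*H) / (H - 1/2) ^ 2) *
        ((1 - h * σ / t) ^ (1 - 2*H) * ((σ + 1) ^ (H - 1/2) - σ ^ (H - 1/2)) ^ 2) := by
    intro σ hσ
    rw [uIcc_of_le (by positivity)] at hσ
    obtain ⟨hσ0, hσ1⟩ := hσ
    have hhσ : h * σ ≤ t := by
      rw [le_div_iff₀ hh] at hσ1; linarith [hσ1]
    have e1 : t + h - (t - h * σ) = h * (σ + 1) := by ring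
    have e2 : t - (t - h * σ) = h * σ := by ring
    have e3 : t - h * σ = t * (1 - h * σ / t) := by field_simp
    have h1t : 0 ≤ 1 - h * σ / t := by
      rw [sub_nonneg, div_le_one ht]; exact hhσ
    rw [hφ]
    simp only [e1, e2]
    rw [e3, Real.mul_rpow ht.le h1t, Real.mul_rpow hh.le (by linarith : (0:ℝ) ≤ σ + 1),
      Real.mul_rpow hh.le hσ0]
    rw [show h ^ (H - 1/2) * (σ + 1) ^ (H - 1/2) - h ^ (H - 1/2) * σ ^ (H - 1/2)
        = h ^ (H - 1/2) * ((σ + 1) ^ (H - 1/2) - σ ^ (H - 1/2)) from by ring]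
    rw [div_pow, mul_pow, sq_rpow hh.le, show (H - 1/2) * 2 = 2*H - 1 from by ring]
    ring
  have step4 : (∫ σ in (0:ℝ)..(t/h), φ (t - h * σ))
      = (h ^ (2*H - 1) * t ^ (1 - 2*H) / (H - 1/2) ^ 2) *
        ∫ s in (0:ℝ)..(t/h), (1 - h * s / t) ^ (1 - 2*H) *
          ((s + 1) ^ (H - 1/2) - s ^ (H - 1/2)) ^ 2 := by
    rw [intervalIntegral.integral_congr step3, intervalIntegral.integral_const_mul]
  have hh2 : h * h ^ (2*H - 1) = h ^ (2*H) := by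
    nth_rewrite 1 [← Real.rpow_one h]
    rw [← Real.rpow_add hh]
    norm_num
  calc (∫ s in (0:ℝ)..t, φ s) = h * (h⁻¹ * ∫ v in (0:ℝ)..t, φ (t - v)) := by
        rw [step1]; field_simp
    _ = h * ∫ σ in (0:ℝ)..(t/h), φ (t - h * σ) := by rw [step2]
    _ = _ := by
        rw [step4, ← mul_assoc, show h * (h ^ (2*H - 1) * t ^ (1 - 2*H) / (H - 1/2) ^ 2)
          = (h * h ^ (2*H - 1)) * t ^ (1 - 2*H) / (H - 1/2) ^ 2 from by ring, hh2]

end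


section
variable {H t h : ℝ}

lemma phiInt0 (hH : 1/2 < H) (hH1 : H < 1) (a b : ℝ) :
    IntervalIntegrable (fun s => s ^ (1 - 2*H) *
      ((((t + h - s) ^ (H - 1/2) - (t - s) ^ (H - 1/2)) / (H - 1/2))) ^ 2) volume a b :=
  (intervalIntegrable_rpow' (by linarith)).mul_continuousOn
    (((Kcont hH).pow 2).continuousOn)

-- MVT bound on K
lemma Kle1 (hH : 1/2 < H) (hH1 : H < 1) (hh : 0 < h) {s : ℝ} (hst : s < t) :
    ((t + h - s) ^ (H - 1/2) - (t - s) ^ (H - 1/2)) / (H - 1/2)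
      ≤ h * (t - s) ^ (H - 3/2) := by
  have key := rpow_sub_rpow_le (a := H - 1/2) (x := t - s) (k := h)
    (by linarith) (by linarith) (by linarith) hh
  rw [show t - s + h = t + h - s from by ring] at key
  rw [div_le_iff₀ (by linarith : (0:ℝ) < H - 1/2)]
  calc (t + h - s) ^ (H - 1/2) - (t - s) ^ (H - 1/2)
      ≤ (H - 1/2) * h * (t - s) ^ (H - 1/2 - 1) := key
    _ = h * (t - s) ^ (H - 3/2) * (H - 1/2) := by
        rw [show H - 1/2 - 1 = H - 3/2 from by ring]; ring

-- subadditivity bound on K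
lemma Kle2 (hH : 1/2 < H) (hH1 : H < 1) (hh : 0 < h) {s : ℝ} (hst : s ≤ t) :
    ((t + h - s) ^ (H - 1/2) - (t - s) ^ (H - 1/2)) / (H - 1/2)
      ≤ h ^ (H - 1/2) / (H - 1/2) := by
  have key := rpow_add_le_add_rpow' (x := t - s) (y := h) (p := H - 1/2)
    (by linarith) hh.le (by linarith) (by linarith)
  rw [show t - s + h = t + h - s from by ring] at key
  have hnum : (t + h - s) ^ (H - 1/2) - (t - s) ^ (H - 1/2) ≤ h ^ (H - 1/2) := by linarith
  have ha : (0:ℝ) < H - 1/2 := by linarith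
  gcongr

end

section
variable {H t : ℝ}

lemma P3 (hH : 1/2 < H) (hH1 : H < 1) (ht : 0 < t) :
    ∃ C : ℝ, 0 ≤ C ∧ ∀ h : ℝ, 0 < h → h < t/2 →
      (∫ s in (0:ℝ)..t, s ^ (1 - 2*H) *
        ((((t + h - s) ^ (H - 1/2) - (t - s) ^ (H - 1/2)) / (H - 1/2))) ^ 2)
      ≤ C * h ^ (2*H) := by
  have ha : (0:ℝ) < H - 1/2 := by linarith
  have ht2 : (0:ℝ) < t/2 := by linarith
  refine ⟨(t/2) ^ (2 - 2*H) / (2 - 2*H) * ((t/2) ^ ((H - 3/2) * 2) * (t/2) ^ (2 - 2*H))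
    + (t/2) ^ (1 - 2*H) / (2 - 2*H)
    + (t/2) ^ (1 - 2*H) / (H - 1/2) ^ 2, by
      have r1 : (0:ℝ) ≤ (t/2) ^ (2 - 2*H) := Real.rpow_nonneg ht2.le _
      have r2 : (0:ℝ) ≤ (t/2) ^ ((H - 3/2) * 2) := Real.rpow_nonneg ht2.le _
      have r3 : (0:ℝ) ≤ (t/2) ^ (1 - 2*H) := Real.rpow_nonneg ht2.le _
      have h2H : (0:ℝ) < 2 - 2*H := by linarith
      have := sq_nonneg (H - 1/2)
      positivity, ?_⟩
  intro h hh hht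
  have hth : t/2 < t - h := by linarith
  -- split the integral
  have i1 : IntervalIntegrable (fun s => s ^ (1 - 2*H) *
      ((((t + h - s) ^ (H - 1/2) - (t - s) ^ (H - 1/2)) / (H - 1/2))) ^ 2)
      volume 0 (t/2) := phiInt0 hH hH1 _ _
  have i2 : IntervalIntegrable (fun s => s ^ (1 - 2*H) *
      ((((t + h - s) ^ (H - 1/2) - (t - s) ^ (H - 1/2)) / (H - 1/2))) ^ 2)
      volume (t/2) (t - h) := phiInt0 hH hH1 _ _
  have i3 : IntervalIntegrable (fun s => s ^ (1 - 2*H) *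
      ((((t + h - s) ^ (H - 1/2) - (t - s) ^ (H - 1/2)) / (H - 1/2))) ^ 2)
      volume (t - h) t := phiInt0 hH hH1 _ _
  have hsplit : (∫ s in (0:ℝ)..t, s ^ (1 - 2*H) *
        ((((t + h - s) ^ (H - 1/2) - (t - s) ^ (H - 1/2)) / (H - 1/2))) ^ 2)
      = (∫ s in (0:ℝ)..(t/2), s ^ (1 - 2*H) *
          ((((t + h - s) ^ (H - 1/2) - (t - s) ^ (H - 1/2)) / (H - 1/2))) ^ 2)
        + (∫ s in (t/2)..(t - h), s ^ (1 - 2*H) *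
          ((((t + h - s) ^ (H - 1/2) - (t - s) ^ (H - 1/2)) / (H - 1/2))) ^ 2)
        + (∫ s in (t - h)..t, s ^ (1 - 2*H) *
          ((((t + h - s) ^ (H - 1/2) - (t - s) ^ (H - 1/2)) / (H - 1/2))) ^ 2) := by
    rw [intervalIntegral.integral_add_adjacent_intervals i1 i2,
      intervalIntegral.integral_add_adjacent_intervals (i1.trans i2) i3]
  rw [hsplit]
  -- piece 1
  have hb1 : (∫ s in (0:ℝ)..(t/2), s ^ (1 - 2*H) *
        ((((t + h - s) ^ (H - 1/2) - (t - s) ^ (H - 1/2)) / (H - 1/2))) ^ 2)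
      ≤ (t/2) ^ (2 - 2*H) / (2 - 2*H) * ((t/2) ^ ((H - 3/2) * 2) * (t/2) ^ (2 - 2*H))
        * h ^ (2*H) := by
    have mono := intervalIntegral.integral_mono_on ht2.le i1
      (((intervalIntegrable_rpow' (a := 0) (b := t/2) (r := 1 - 2*H)
        (by linarith)).mul_const ((h * (t/2) ^ (H - 3/2)) ^ 2))) ?_
    · rw [intervalIntegral.integral_mul_const,
        integral_rpow (Or.inl (by linarith : (-1:ℝ) < 1 - 2*H))] at mono
      have e0 : (0:ℝ) ^ (1 - 2*H + 1) = 0 := by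
        rw [Real.zero_rpow]; linarith
      rw [e0, sub_zero, show (1 : ℝ) - 2*H + 1 = 2 - 2*H from by ring] at mono
      refine mono.trans ?_
      rw [mul_pow, sq_rpow ht2.le]
      have hh2 : (h:ℝ)^2 ≤ h^(2*H) * (t/2)^(2 - 2*H) := by
        have e : (h:ℝ)^2 = h^(2*H) * h^(2 - 2*H) := by
          rw [← Real.rpow_natCast h 2, ← Real.rpow_add hh]; norm_num
        rw [e]
        exact mul_le_mul_of_nonneg_left
          (Real.rpow_le_rpow hh.le hht.le (by linarith)) (Real.rpow_nonneg hh.le _)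
      have hX : (0:ℝ) ≤ (t/2) ^ (2 - 2*H) / (2 - 2*H) :=
        div_nonneg (Real.rpow_nonneg ht2.le _) (by linarith)
      have hY : (0:ℝ) ≤ (t/2) ^ ((H - 3/2) * 2) := Real.rpow_nonneg ht2.le _
      calc (t/2) ^ (2 - 2*H) / (2 - 2*H) * (h ^ 2 * (t/2) ^ ((H - 3/2) * 2))
          ≤ (t/2) ^ (2 - 2*H) / (2 - 2*H) * ((h ^ (2*H) * (t/2) ^ (2 - 2*H))
            * (t/2) ^ ((H - 3/2) * 2)) :=
            mul_le_mul_of_nonneg_left (mul_le_mul_of_nonneg_right hh2 hY) hX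
        _ = _ := by ring
    · intro s hs
      have hKle : (((t + h - s) ^ (H - 1/2) - (t - s) ^ (H - 1/2)) / (H - 1/2))
          ≤ h * (t/2) ^ (H - 3/2) := by
        refine (Kle1 hH hH1 hh (by linarith [hs.2] : s < t)).trans ?_
        have := Real.rpow_le_rpow_of_nonpos ht2 (by linarith [hs.2] : t/2 ≤ t - s)
          (by linarith : H - 3/2 ≤ 0)
        exact mul_le_mul_of_nonneg_left this hh.le
      have hK0 := Knonneg (t := t) (h := h) hH hh.le (by linarith [hs.2] : s ≤ t)
      exact mul_le_mul_of_nonneg_left (pow_le_pow_left₀ hK0 hKle 2)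
        (Real.rpow_nonneg hs.1 _)
  -- piece 2
  have hb2 : (∫ s in (t/2)..(t - h), s ^ (1 - 2*H) *
        ((((t + h - s) ^ (H - 1/2) - (t - s) ^ (H - 1/2)) / (H - 1/2))) ^ 2)
      ≤ (t/2) ^ (1 - 2*H) / (2 - 2*H) * h ^ (2*H) := by
    have hmajcont : IntervalIntegrable
        (fun s => (t/2) ^ (1 - 2*H) * (h ^ 2 * (t - s) ^ ((H - 3/2) * 2)))
        volume (t/2) (t - h) := by
      apply ContinuousOn.intervalIntegrable
      apply continuousOn_const.mul (continuousOn_const.mul ?_)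
      apply ContinuousOn.rpow_const ((continuous_const.sub continuous_id).continuousOn)
      intro x hx
      rw [uIcc_of_le hth.le] at hx
      exact Or.inl (by intro hc; simp only [Pi.sub_apply, id] at hc; have := hx.2; nlinarith)
    have mono := intervalIntegral.integral_mono_on hth.le i2 hmajcont ?_
    · rw [intervalIntegral.integral_const_mul, intervalIntegral.integral_const_mul] at mono
      have hcv : (∫ s in (t/2)..(t - h), (t - s) ^ ((H - 3/2) * 2))
          = ((t/2) ^ ((H - 3/2) * 2 + 1) - h ^ ((H - 3/2) * 2 + 1)) / ((H - 3/2) * 2 + 1) := by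
        rw [intervalIntegral.integral_comp_sub_left (fun x => x ^ ((H - 3/2) * 2)) t]
        rw [show t - (t - h) = h from by ring, show t - t/2 = t/2 from by ring]
        exact integral_rpow (Or.inr ⟨by intro hc; nlinarith, by
          rw [uIcc_of_le (by linarith : h ≤ t/2)]
          intro hc; exact absurd hc.1 (by linarith)⟩)
      have hcvle : (∫ s in (t/2)..(t - h), (t - s) ^ ((H - 3/2) * 2))
          ≤ h ^ ((H - 3/2) * 2 + 1) / (2 - 2*H) := by
        have heq : ((t/2) ^ ((H - 3/2) * 2 + 1) - h ^ ((H - 3/2) * 2 + 1)) / ((H - 3/2) * 2 + 1)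
            = (h ^ ((H - 3/2) * 2 + 1) - (t/2) ^ ((H - 3/2) * 2 + 1)) / (2 - 2*H) := by
          rw [div_eq_div_iff (by intro hc; nlinarith) (by intro hc; nlinarith)]
          ring
        rw [hcv, heq]
        have hnum : h ^ ((H - 3/2) * 2 + 1) - (t/2) ^ ((H - 3/2) * 2 + 1)
            ≤ h ^ ((H - 3/2) * 2 + 1) := by
          have := Real.rpow_nonneg ht2.le ((H - 3/2) * 2 + 1); linarith
        gcongr
        linarith
      refine mono.trans ?_
      have e3 : h ^ 2 * (h ^ ((H - 3/2) * 2 + 1) / (2 - 2*H)) = h ^ (2*H) / (2 - 2*H) := by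
        rw [← mul_div_assoc, ← Real.rpow_natCast h 2, ← Real.rpow_add hh,
          show ((2:ℕ):ℝ) + ((H - 3/2) * 2 + 1) = 2*H from by push_cast; ring]
      calc (t/2) ^ (1 - 2*H) * (h ^ 2 * ∫ s in (t/2)..(t - h), (t - s) ^ ((H - 3/2) * 2))
          ≤ (t/2) ^ (1 - 2*H) * (h ^ 2 * (h ^ ((H - 3/2) * 2 + 1) / (2 - 2*H))) := by
            apply mul_le_mul_of_nonneg_left
              (mul_le_mul_of_nonneg_left hcvle (by positivity))
              (Real.rpow_nonneg ht2.le _)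
        _ = _ := by rw [e3]; ring
    · intro s hs
      have hs0 : (0:ℝ) < s := lt_of_lt_of_le ht2 hs.1
      have hst : s < t := by linarith [hs.2]
      have h1 : s ^ (1 - 2*H) ≤ (t/2) ^ (1 - 2*H) :=
        Real.rpow_le_rpow_of_nonpos ht2 hs.1 (by linarith)
      have hK0 := Knonneg (t := t) (h := h) hH hh.le hst.le
      have hKle := Kle1 hH hH1 hh hst
      have h2 : ((((t + h - s) ^ (H - 1/2) - (t - s) ^ (H - 1/2)) / (H - 1/2))) ^ 2
          ≤ h ^ 2 * (t - s) ^ ((H - 3/2) * 2) := by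
        rw [← sq_rpow (by linarith : (0:ℝ) ≤ t - s), ← mul_pow]
        exact pow_le_pow_left₀ hK0 hKle 2
      exact mul_le_mul h1 h2 (sq_nonneg _) (Real.rpow_nonneg ht2.le _)
  -- piece 3
  have hb3 : (∫ s in (t - h)..t, s ^ (1 - 2*H) *
        ((((t + h - s) ^ (H - 1/2) - (t - s) ^ (H - 1/2)) / (H - 1/2))) ^ 2)
      ≤ (t/2) ^ (1 - 2*H) / (H - 1/2) ^ 2 * h ^ (2*H) := by
    have mono := intervalIntegral.integral_mono_on (by linarith : t - h ≤ t) i3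
      (_root_.intervalIntegrable_const
        (c := (t/2) ^ (1 - 2*H) * (h ^ (H - 1/2) / (H - 1/2)) ^ 2)) ?_
    · rw [intervalIntegral.integral_const, smul_eq_mul,
        show t - (t - h) = h from by ring] at mono
      refine mono.trans (le_of_eq ?_)
      rw [div_pow, sq_rpow hh.le]
      rw [show h * ((t/2) ^ (1 - 2*H) * (h ^ ((H - 1/2) * 2) / (H - 1/2) ^ 2))
        = (t/2) ^ (1 - 2*H) / (H - 1/2) ^ 2 * (h * h ^ ((H - 1/2) * 2)) from by ring]
      congr 1
      nth_rewrite 1 [← Real.rpow_one h]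
      rw [← Real.rpow_add hh, show (1:ℝ) + (H - 1/2) * 2 = 2*H from by ring]
    · intro s hs
      have h1 : s ^ (1 - 2*H) ≤ (t/2) ^ (1 - 2*H) :=
        Real.rpow_le_rpow_of_nonpos ht2 (by linarith [hs.1]) (by linarith)
      have hK0 := Knonneg (t := t) (h := h) hH hh.le hs.2
      have hKle := Kle2 hH hH1 hh hs.2
      exact mul_le_mul h1 (pow_le_pow_left₀ hK0 hKle 2) (sq_nonneg _)
        (Real.rpow_nonneg ht2.le _)
  linarith
end


/-- Two-sided bound and convergence to `0` of
`V(h) = h^{-2α} c_H² ∫₀^t s^{1-2H} (∫_t^{t+h} (u-s)^{H-3/2} u^{H-1/2} du)² ds`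
for `α ∈ (0, H)`, with `I(h) = ∫₀^{t/h} (1 - hs/t)^{1-2H} g(s)² ds` and
`c = c_H/(H-1/2)`. -/
theorem stmt14 (H t α c_H : ℝ) (hH : 1/2 < H ∧ H < 1) (ht : 0 < t)
    (hα : 0 < α ∧ α < H) (hc : 0 < c_H)
    (g V I : ℝ → ℝ)
    (hg : ∀ s : ℝ, g s = (s + 1) ^ (H - 1/2) - s ^ (H - 1/2))
    (hV : ∀ h : ℝ, 0 < h → V h = h ^ (-(2*α)) * c_H ^ 2 *
      ∫ s in (0:ℝ)..t, s ^ (1 - 2*H) *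
        (∫ u in t..(t + h), (u - s) ^ (H - 3/2) * u ^ (H - 1/2)) ^ 2)
    (hI : ∀ h : ℝ, 0 < h → I h = ∫ s in (0:ℝ)..(t / h), (1 - h * s / t) ^ (1 - 2*H) * (g s) ^ 2) :
    (∀ h : ℝ, 0 < h →
      (c_H / (H - 1/2)) ^ 2 * h ^ (2 * (H - α)) * I h ≤ V h ∧
      V h ≤ (c_H / (H - 1/2)) ^ 2 * (1 + h / t) ^ (2*H - 1) * h ^ (2 * (H - α)) * I h) ∧
    Tendsto V (nhdsWithin 0 (Set.Ioi 0)) (nhds 0) := by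
  obtain ⟨hH1, hH2⟩ := hH
  obtain ⟨hα1, hα2⟩ := hα
  have ha : (0:ℝ) < H - 1/2 := by linarith
  have main : ∀ h : ℝ, 0 < h →
      (c_H / (H - 1/2)) ^ 2 * h ^ (2 * (H - α)) * I h ≤ V h ∧
      V h ≤ (c_H / (H - 1/2)) ^ 2 * (1 + h / t) ^ (2*H - 1) * h ^ (2 * (H - α)) * I h := by
    intro h hh
    have hVh := hV h hh
    have hIh := hI h hh
    simp only [hg] at hIh
    have hP1 := P1 (t := t) (h := h) hH1 hH2 ht hh
    have hA : (∫ s in (0:ℝ)..t, s ^ (1 - 2*H) *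
          ((((t + h - s) ^ (H - 1/2) - (t - s) ^ (H - 1/2)) / (H - 1/2))) ^ 2)
        = h ^ (2*H) * t ^ (1 - 2*H) / (H - 1/2) ^ 2 * I h := by
      rw [P2 hH1 hH2 ht hh, ← hIh]
    have hfac : (0:ℝ) ≤ h ^ (-(2*α)) * c_H ^ 2 := by positivity
    have eh : h ^ (-(2*α)) * h ^ (2*H) = h ^ (2*(H - α)) := by
      rw [← Real.rpow_add hh]; congr 1; ring
    have et : (t ^ (H - 1/2)) ^ 2 * t ^ (1 - 2*H) = 1 := by
      rw [sq_rpow ht.le, ← Real.rpow_add ht,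
        show (H - 1/2) * 2 + (1 - 2*H) = 0 from by ring, Real.rpow_zero]
    constructor
    · have step := mul_le_mul_of_nonneg_left hP1.1 hfac
      rw [hA] at step
      rw [hVh]
      refine le_trans (le_of_eq ?_) step
      calc (c_H / (H - 1/2)) ^ 2 * h ^ (2*(H - α)) * I h
          = c_H ^ 2 / (H - 1/2) ^ 2 * (h ^ (-(2*α)) * h ^ (2*H)) * I h := by
            rw [eh, div_pow]
        _ = c_H ^ 2 / (H - 1/2) ^ 2 * ((t ^ (H - 1/2)) ^ 2 * t ^ (1 - 2*H))
              * (h ^ (-(2*α)) * h ^ (2*H)) * I h := by rw [et]; ring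
        _ = h ^ (-(2*α)) * c_H ^ 2 * ((t ^ (H - 1/2)) ^ 2
              * (h ^ (2*H) * t ^ (1 - 2*H) / (H - 1/2) ^ 2 * I h)) := by ring
    · have step := mul_le_mul_of_nonneg_left hP1.2 hfac
      rw [hA] at step
      rw [hVh]
      refine le_trans step (le_of_eq ?_)
      have etp : ((t + h) ^ (H - 1/2)) ^ 2 * t ^ (1 - 2*H) = (1 + h/t) ^ (2*H - 1) := by
        rw [sq_rpow (by linarith : (0:ℝ) ≤ t + h),
          show t + h = t * (1 + h/t) from by field_simp,
          Real.mul_rpow ht.le (by positivity), show (H - 1/2) * 2 = 2*H - 1 from by ring,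
          mul_comm (t ^ (2*H - 1)) _, mul_assoc, ← Real.rpow_add ht,
          show 2*H - 1 + (1 - 2*H) = 0 from by ring, Real.rpow_zero, mul_one]
      calc h ^ (-(2*α)) * c_H ^ 2 * (((t + h) ^ (H - 1/2)) ^ 2
              * (h ^ (2*H) * t ^ (1 - 2*H) / (H - 1/2) ^ 2 * I h))
          = c_H ^ 2 / (H - 1/2) ^ 2 * (((t + h) ^ (H - 1/2)) ^ 2 * t ^ (1 - 2*H))
              * (h ^ (-(2*α)) * h ^ (2*H)) * I h := by ring
        _ = (c_H / (H - 1/2)) ^ 2 * (1 + h/t) ^ (2*H - 1) * h ^ (2*(H - α)) * I h := by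
            rw [etp, eh, div_pow]
  refine ⟨main, ?_⟩
  obtain ⟨C, hC0, hC⟩ := P3 (t := t) hH1 hH2 ht
  have hD : Tendsto (fun x : ℝ => (c_H ^ 2 * ((2*t) ^ ((H - 1/2) * 2) * C)) * x ^ (2*(H - α)))
      (nhdsWithin 0 (Set.Ioi 0)) (nhds 0) := by
    have h0 : Tendsto (fun x : ℝ => x ^ (2*(H - α))) (nhds 0) (nhds 0) := by
      have := (Real.continuousAt_rpow_const 0 (2*(H - α)) (Or.inr (by linarith))).tendsto
      rwa [Real.zero_rpow (by intro hc'; nlinarith)] at this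
    have h1 : Tendsto (fun x : ℝ => x ^ (2*(H - α))) (nhdsWithin 0 (Set.Ioi 0)) (nhds 0) :=
      h0.mono_left nhdsWithin_le_nhds
    have h2 := h1.const_mul (c_H ^ 2 * ((2*t) ^ ((H - 1/2) * 2) * C))
    simpa using h2
  refine tendsto_of_tendsto_of_tendsto_of_le_of_le' tendsto_const_nhds hD ?_ ?_
  · filter_upwards [Ioo_mem_nhdsGT_of_mem (show (0:ℝ) ∈ Ico (0:ℝ) (t/2) from
      ⟨le_refl 0, by linarith⟩)] with x hx
    have hVx := hV x hx.1
    have hP1 := P1 (t := t) (h := x) hH1 hH2 ht hx.1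
    have hA0 : (0:ℝ) ≤ ∫ s in (0:ℝ)..t, s ^ (1 - 2*H) *
        ((((t + x - s) ^ (H - 1/2) - (t - s) ^ (H - 1/2)) / (H - 1/2))) ^ 2 :=
      intervalIntegral.integral_nonneg ht.le
        (fun s hs => mul_nonneg (Real.rpow_nonneg hs.1 _) (sq_nonneg _))
    have hB0 : (0:ℝ) ≤ ∫ s in (0:ℝ)..t, s ^ (1 - 2*H) *
        (∫ u in t..(t + x), (u - s) ^ (H - 3/2) * u ^ (H - 1/2)) ^ 2 :=
      le_trans (mul_nonneg (sq_nonneg _) hA0) hP1.1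
    rw [hVx]
    exact mul_nonneg (mul_nonneg (Real.rpow_nonneg hx.1.le _) (by positivity)) hB0
  · filter_upwards [Ioo_mem_nhdsGT_of_mem (show (0:ℝ) ∈ Ico (0:ℝ) (t/2) from
      ⟨le_refl 0, by linarith⟩)] with x hx
    have hVx := hV x hx.1
    have hP1 := P1 (t := t) (h := x) hH1 hH2 ht hx.1
    have hA0 : (0:ℝ) ≤ ∫ s in (0:ℝ)..t, s ^ (1 - 2*H) *
        ((((t + x - s) ^ (H - 1/2) - (t - s) ^ (H - 1/2)) / (H - 1/2))) ^ 2 :=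
      intervalIntegral.integral_nonneg ht.le
        (fun s hs => mul_nonneg (Real.rpow_nonneg hs.1 _) (sq_nonneg _))
    have hAC := hC x hx.1 hx.2
    have hsq : ((t + x) ^ (H - 1/2)) ^ 2 ≤ (2*t) ^ ((H - 1/2) * 2) := by
      rw [sq_rpow (by linarith [hx.1] : (0:ℝ) ≤ t + x)]
      exact Real.rpow_le_rpow (by linarith [hx.1]) (by linarith [hx.2]) (by linarith)
    have hB : (∫ s in (0:ℝ)..t, s ^ (1 - 2*H) *
          (∫ u in t..(t + x), (u - s) ^ (H - 3/2) * u ^ (H - 1/2)) ^ 2)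
        ≤ (2*t) ^ ((H - 1/2) * 2) * (C * x ^ (2*H)) :=
      hP1.2.trans (mul_le_mul hsq hAC hA0 (Real.rpow_nonneg (by linarith) _))
    rw [hVx]
    have hfac : (0:ℝ) ≤ x ^ (-(2*α)) * c_H ^ 2 :=
      mul_nonneg (Real.rpow_nonneg hx.1.le _) (by positivity)
    have step := mul_le_mul_of_nonneg_left hB hfac
    refine le_trans step (le_of_eq ?_)
    have eh : x ^ (-(2*α)) * x ^ (2*H) = x ^ (2*(H - α)) := by
      rw [← Real.rpow_add hx.1]; congr 1; ring
    calc x ^ (-(2*α)) * c_H ^ 2 * ((2*t) ^ ((H - 1/2) * 2) * (C * x ^ (2*H)))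
        = c_H ^ 2 * ((2*t) ^ ((H - 1/2) * 2) * C) * (x ^ (-(2*α)) * x ^ (2*H)) := by ring
      _ = _ := by rw [eh]
end
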